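/- Let W be a real P×P matrix and let A := W ∘ W denote its entrywise (Hadamard) square, so all entries of A are nonnegative. Then trace(Matrix.exp ℝ A) ≥ P, and trace(Matrix.exp ℝ A) = P if and only if A is nilpotent, i.e., A^P = 0. -/

import Mathlib

set_option maxHeartbeats 1000000

open Matrix
open scoped Matrix

section Aux

variable {P : ℕ} (A : Matrix (Fin P) (Fin P) ℝ)

lemma aux_pow_nonneg (hA : ∀ i j, 0 ≤ A i j) :
    ∀ (n : ℕ) (i j : Fin P), 0 ≤ (A ^ n) i j := by
  intro n
  induction n with
  | zero => intro i j; simp [Matrix.one_apply]; positivity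
  | succ n ih =>
    intro i j
    rw [pow_succ, Matrix.mul_apply]
    exact Finset.sum_nonneg fun k _ => mul_nonneg (ih i k) (hA k j)

lemma aux_chain_pos (hA : ∀ i j, 0 ≤ A i j) :
    ∀ (n : ℕ) (x : ℕ → Fin P), (∀ t < n, 0 < A (x t) (x (t + 1))) →
      0 < (A ^ n) (x 0) (x n) := by
  intro n
  induction n with
  | zero => intro x _; simp [Matrix.one_apply]
  | succ n ih =>
    intro x hx
    have h1 : 0 < (A ^ n) (x 1) (x (n + 1)) := by
      have := ih (fun t => x (t + 1)) (fun t ht => hx (t + 1) (by omega))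
      simpa using this
    have h0 : 0 < A (x 0) (x 1) := hx 0 (by omega)
    rw [pow_succ', Matrix.mul_apply]
    have hterm : 0 < A (x 0) (x 1) * (A ^ n) (x 1) (x (n + 1)) := mul_pos h0 h1
    refine lt_of_lt_of_le hterm ?_
    exact Finset.single_le_sum (f := fun k => A (x 0) k * (A ^ n) k (x (n + 1)))
      (fun k _ => mul_nonneg (hA _ _) (aux_pow_nonneg A hA n _ _)) (Finset.mem_univ (x 1))

lemma aux_exists_chain :
    ∀ (n : ℕ) (i j : Fin P), (A ^ n) i j ≠ 0 →
      ∃ x : ℕ → Fin P, x 0 = i ∧ x n = j ∧ ∀ t < n, A (x t) (x (t + 1)) ≠ 0 := by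
  intro n
  induction n with
  | zero =>
    intro i j h
    have hij : i = j := by
      by_contra hij
      rw [pow_zero, Matrix.one_apply_ne hij] at h
      exact h rfl
    exact ⟨fun _ => i, rfl, hij, fun t ht => absurd ht (Nat.not_lt_zero t)⟩
  | succ n ih =>
    intro i j h
    rw [pow_succ, Matrix.mul_apply] at h
    obtain ⟨k, -, hk⟩ := Finset.exists_ne_zero_of_sum_ne_zero h
    have h1 : (A ^ n) i k ≠ 0 := fun h' => hk (by simp [h'])
    have h2 : A k j ≠ 0 := fun h' => hk (by simp [h'])
    obtain ⟨x, hx0, hxn, hedge⟩ := ih i k h1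
    refine ⟨fun t => if t ≤ n then x t else j, by simp [hx0], by simp, ?_⟩
    intro t ht
    rcases Nat.lt_or_ge t n with h' | h'
    · simpa [Nat.le_of_lt h', Nat.succ_le_of_lt h'] using hedge t h'
    · have : t = n := by omega
      subst this
      simpa [hxn] using h2

lemma aux_nilpotent (hA : ∀ i j, 0 ≤ A i j)
    (hdiag : ∀ (k : ℕ) (v : Fin P), (A ^ (k + 1)) v v = 0) : A ^ P = 0 := by
  ext i j
  by_contra h
  obtain ⟨x, hx0, hxP, hedge⟩ := aux_exists_chain A P i j (by simpa using h)
  obtain ⟨s, t, hst, hxst⟩ := Fintype.exists_ne_map_eq_of_card_lt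
    (fun u : Fin (P + 1) => x u.val) (by simp)
  wlog hlt : (s : ℕ) < (t : ℕ) generalizing s t
  · exact this t s hst.symm hxst.symm (by omega)
  · set m : ℕ := (t : ℕ) - (s : ℕ) with hm
    have hm1 : 1 ≤ m := by omega
    have hpos : 0 < (A ^ m) (x s) (x ((s : ℕ) + m)) := by
      apply aux_chain_pos A hA m (fun u => x ((s : ℕ) + u))
      intro u hu
      have hlt' : (s : ℕ) + u < P := by omega
      have := hedge ((s : ℕ) + u) hlt'
      have := lt_of_le_of_ne (hA _ _) (Ne.symm this)
      simpa [Nat.add_assoc] using this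
    have hsm : (s : ℕ) + m = (t : ℕ) := by omega
    rw [hsm, hxst] at hpos
    have := hdiag (m - 1) (x t)
    rw [Nat.sub_add_cancel hm1] at this
    rw [this] at hpos
    exact lt_irrefl 0 hpos

end Aux

theorem notears_acyclicity {P : ℕ} (W : Matrix (Fin P) (Fin P) ℝ) :
    (P : ℝ) ≤ (NormedSpace.exp (W ⊙ W)).trace ∧
      ((NormedSpace.exp (W ⊙ W)).trace = (P : ℝ) ↔ (W ⊙ W) ^ P = 0) := by
  classical
  set A := W ⊙ W with hAdef
  have hAnn : ∀ i j, 0 ≤ A i j := by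
    intro i j
    simp only [hAdef, Matrix.hadamard_apply]
    exact mul_self_nonneg _
  letI : SeminormedRing (Matrix (Fin P) (Fin P) ℝ) := Matrix.linftyOpSemiNormedRing
  letI : NormedRing (Matrix (Fin P) (Fin P) ℝ) := Matrix.linftyOpNormedRing
  letI : NormedAlgebra ℝ (Matrix (Fin P) (Fin P) ℝ) := Matrix.linftyOpNormedAlgebra
  have hsum : HasSum (fun n : ℕ => (n.factorial⁻¹ : ℝ) • A ^ n) (NormedSpace.exp A) := by
    rw [NormedSpace.exp_eq_tsum (𝕂 := ℝ)]
    exact (NormedSpace.expSeries_summable' (𝕂 := ℝ) A).hasSum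
  have hcont : Continuous (fun M : Matrix (Fin P) (Fin P) ℝ => M.trace) := by
    simp only [Matrix.trace, Matrix.diag]
    exact continuous_finset_sum _ fun i _ =>
      (continuous_apply i).comp (continuous_apply i)
  have htr : HasSum (fun n : ℕ => (n.factorial⁻¹ : ℝ) * (A ^ n).trace)
      ((NormedSpace.exp A).trace) := by
    have h2 := hsum.map (Matrix.traceAddMonoidHom (Fin P) ℝ) hcont
    have he : (Matrix.traceAddMonoidHom (Fin P) ℝ ∘ fun n : ℕ => (n.factorial⁻¹ : ℝ) • A ^ n)
        = fun n : ℕ => (n.factorial⁻¹ : ℝ) * (A ^ n).trace := by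
      funext n
      simp [Matrix.traceAddMonoidHom, Matrix.trace_smul, smul_eq_mul]
    rwa [he] at h2
  set f : ℕ → ℝ := fun n => (n.factorial⁻¹ : ℝ) * (A ^ n).trace with hf
  have hf0 : f 0 = (P : ℝ) := by simp [hf, Matrix.trace_one]
  have hfnn : ∀ n, 0 ≤ f n := by
    intro n
    apply mul_nonneg (by positivity)
    exact Finset.sum_nonneg fun i _ => aux_pow_nonneg A hAnn n i i
  have htsum : (NormedSpace.exp A).trace = f 0 + ∑' n, f (n + 1) := by
    rw [← htr.tsum_eq]
    exact Summable.tsum_eq_zero_add htr.summable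
  have hshift : Summable fun n => f (n + 1) := (summable_nat_add_iff 1).mpr htr.summable
  have htail_nn : 0 ≤ ∑' n, f (n + 1) := tsum_nonneg fun n => hfnn _
  constructor
  · rw [htsum, hf0]; linarith
  constructor
  · intro heq
    have htail : ∑' n, f (n + 1) = 0 := by rw [htsum, hf0] at heq; linarith
    have hall : ∀ n, f (n + 1) = 0 := by
      intro n
      have hle : f (n + 1) ≤ ∑' m, f (m + 1) :=
        Summable.le_tsum hshift n fun j _ => hfnn _
      rw [htail] at hle
      exact le_antisymm hle (hfnn _)
    have hdiag : ∀ (k : ℕ) (v : Fin P), (A ^ (k + 1)) v v = 0 := by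
      intro k v
      have hk := hall k
      have hfac : ((k + 1).factorial⁻¹ : ℝ) ≠ 0 := by positivity
      have htr0 : (A ^ (k + 1)).trace = 0 := by
        rcases mul_eq_zero.mp hk with h' | h'
        · exact absurd h' hfac
        · exact h'
      have := (Finset.sum_eq_zero_iff_of_nonneg
        (fun i _ => aux_pow_nonneg A hAnn (k + 1) i i)).mp htr0
      exact this v (Finset.mem_univ v)
    exact aux_nilpotent A hAnn hdiag
  · intro hnil
    have hall : ∀ n, f (n + 1) = 0 := by
      intro n
      have hnp : IsNilpotent (A ^ (n + 1)) := by
        refine ⟨P, ?_⟩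
        rw [← pow_mul, mul_comm, pow_mul, hnil, zero_pow (by omega)]
      have := Matrix.isNilpotent_trace_of_isNilpotent hnp
      have := this.eq_zero
      simp [hf, this]
    rw [htsum, hf0]
    simp [hall]
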